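/- Let G be the simple graph on vertex set {0,1,…,11} whose edge set is {0,1},{0,3},{0,5},{0,7},{1,2},{1,8},{1,10},{2,3},{2,8},{2,11},{3,4},{3,7},{4,5},{4,6},{4,9},{4,10},{5,6},{5,9},{5,11},{6,7},{6,10},{6,11},{7,8},{8,9},{9,10},{9,11},{10,11}. Then the characteristic polynomial of the adjacency matrix of G equals a^12 − 27a^10 − 20a^9 + 207a^8 + 168a^7 − 610a^6 − 288a^5 + 723a^4 − 136a^3 − 171a^2 + 84a − 11. -/

import Mathlib

open Polynomial SimpleGraph

/-- Edge list (each unordered edge listed once) of the graph `H9`. -/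
def edgesH9 : List (Fin 12 × Fin 12) :=
  [(0, 1), (0, 3), (0, 5), (0, 7), (1, 2), (1, 8), (1, 10), (2, 3), (2, 8), (2, 11), (3, 4), (3, 7), (4, 5), (4, 6), (4, 9), (4, 10), (5, 6), (5, 9), (5, 11), (6, 7), (6, 10), (6, 11), (7, 8), (8, 9), (9, 10), (9, 11), (10, 11)]

/-- The simple graph on vertex set `Fin 12` with the given edge set. -/
def H9 : SimpleGraph (Fin 12) :=
  SimpleGraph.fromRel (fun i j => (i, j) ∈ edgesH9)

instance : DecidableRel H9.Adj := fun a b =>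
  inferInstanceAs (Decidable (a ≠ b ∧ ((a, b) ∈ edgesH9 ∨ (b, a) ∈ edgesH9)))

def Aexp : Matrix (Fin 12) (Fin 12) ℤ := !![0, 1, 0, 1, 0, 1, 0, 1, 0, 0, 0, 0;
  1, 0, 1, 0, 0, 0, 0, 0, 1, 0, 1, 0;
  0, 1, 0, 1, 0, 0, 0, 0, 1, 0, 0, 1;
  1, 0, 1, 0, 1, 0, 0, 1, 0, 0, 0, 0;
  0, 0, 0, 1, 0, 1, 1, 0, 0, 1, 1, 0;
  1, 0, 0, 0, 1, 0, 1, 0, 0, 1, 0, 1;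
  0, 0, 0, 0, 1, 1, 0, 1, 0, 0, 1, 1;
  1, 0, 0, 1, 0, 0, 1, 0, 1, 0, 0, 0;
  0, 1, 1, 0, 0, 0, 0, 1, 0, 1, 0, 0;
  0, 0, 0, 0, 1, 1, 0, 0, 1, 0, 1, 1;
  0, 1, 0, 0, 1, 0, 1, 0, 0, 1, 0, 1;
  0, 0, 1, 0, 0, 1, 1, 0, 0, 1, 1, 0]

lemma det_cert {n : ℕ} (M E U : Matrix (Fin n) (Fin n) ℤ) (dE dU v : ℤ)
    (h : E * M = U)
    (hE : E.BlockTriangular OrderDual.toDual) (hU : U.BlockTriangular id)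
    (h1 : (∏ i, E i i) = dE) (h2 : (∏ i, U i i) = dU)
    (hdE : dE ≠ 0) (hv : dE * v = dU) : M.det = v := by
  apply mul_left_cancel₀ hdE
  rw [hv, ← h1, ← Matrix.det_of_lowerTriangular E hE, ← Matrix.det_mul, h,
    Matrix.det_of_upperTriangular hU, h2]


def Epm7 : Matrix (Fin 12) (Fin 12) ℤ := !![1, 0, 0, 0, 0, 0, 0, 0, 0, 0, 0, 0;
  (-1), 7, 0, 0, 0, 0, 0, 0, 0, 0, 0, 0;
  1, (-7), 48, 0, 0, 0, 0, 0, 0, 0, 0, 0;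
  (-7), 2, (-7), 47, 0, 0, 0, 0, 0, 0, 0, 0;
  7, (-2), 7, (-47), 315, 0, 0, 0, 0, 0, 0, 0;
  (-1152), 175, (-73), 336, (-1127), 7553, 0, 0, 0, 0, 0, 0;
  8, (-1), (-1), 8, (-63), (-63), 496, 0, 0, 0, 0, 0;
  (-440), 55, 55, (-440), 119, 119, (-512), 3346, 0, 0, 0, 0;
  810, (-2855), (-2855), 810, (-169), (-169), 542, (-3456), 22030, 0, 0, 0;
  54, 73, 73, 54, (-559), (-559), 152, 54, (-638), 4266, 0, 0;
  918, (-12812), 1241, 918, (-9503), 4550, (-11469), 918, 3207, (-11796), 84318, 0;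
  306, 1069, (-4926), 306, 2172, (-3823), (-3823), 306, 1069, (-3932), (-3932), 32038]

def Upm7 : Matrix (Fin 12) (Fin 12) ℤ := !![(-7), (-1), 0, (-1), 0, (-1), 0, (-1), 0, 0, 0, 0;
  0, (-48), (-7), 1, 0, 1, 0, 1, (-7), 0, (-7), 0;
  0, 0, (-329), (-49), 0, (-1), 0, (-1), (-41), 0, 7, (-48);
  0, 0, 0, (-315), (-47), 7, 0, (-40), 5, 0, (-2), 7;
  0, 0, 0, 0, (-2158), (-322), (-315), 40, (-5), (-315), (-313), (-7);
  0, 0, 0, 0, 0, (-50592), (-6426), 816, (-102), (-6426), 952, (-7480);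
  0, 0, 0, 0, 0, 0, (-3346), (-512), 2, 126, (-432), (-432);
  0, 0, 0, 0, 0, 0, 0, (-22030), (-3456), (-238), 338, 338;
  0, 0, 0, 0, 0, 0, 0, 0, (-145044), (-21692), 2482, 2482;
  0, 0, 0, 0, 0, 0, 0, 0, 0, (-28106), (-3932), (-3932);
  0, 0, 0, 0, 0, 0, 0, 0, 0, 0, (-544646), (-66844);
  0, 0, 0, 0, 0, 0, 0, 0, 0, 0, 0, (-203830)]

lemma detMpm7 :
    (Matrix.diagonal (fun _ : Fin 12 => (-7:ℤ)) - Aexp).det = 8011334320 :=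
  det_cert (Matrix.diagonal (fun _ : Fin 12 => (-7:ℤ)) - Aexp) Epm7 Upm7
    15830543624285667054327992025292800 (126823777441496949956431147048914516688896000) (8011334320)
    (by decide) (by intro i j hij; revert i j; exact @of_decide_eq_true _ (@Fintype.decidableForallFintype _ _ (fun i => @Fintype.decidableForallFintype _ _ (fun j => inferInstance) _) _) rfl) (by intro i j hij; revert i j; exact @of_decide_eq_true _ (@Fintype.decidableForallFintype _ _ (fun i => @Fintype.decidableForallFintype _ _ (fun j => inferInstance) _) _) rfl)
    (by decide) (by decide) (by norm_num) (by norm_num)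


def Epm6 : Matrix (Fin 12) (Fin 12) ℤ := !![1, 0, 0, 0, 0, 0, 0, 0, 0, 0, 0, 0;
  (-1), 6, 0, 0, 0, 0, 0, 0, 0, 0, 0, 0;
  1, (-6), 35, 0, 0, 0, 0, 0, 0, 0, 0, 0;
  (-3), 1, (-3), 17, 0, 0, 0, 0, 0, 0, 0, 0;
  3, (-1), 3, (-17), 96, 0, 0, 0, 0, 0, 0, 0;
  (-1225), 222, (-107), 420, (-1188), 6708, 0, 0, 0, 0, 0, 0;
  7, (-1), (-1), 7, (-48), (-48), 329, 0, 0, 0, 0, 0;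
  (-287), 41, 41, (-287), 90, 90, (-343), 1878, 0, 0, 0, 0;
  520, (-1553), (-1553), 520, (-127), (-127), 369, (-1960), 10351, 0, 0, 0;
  40, 57, 57, 40, (-377), (-377), 119, 40, (-439), 2480, 0, 0;
  920, (-12376), 1311, 920, (-8671), 5016, (-10950), 920, 3590, (-11395), 68435, 0;
  184, 718, (-2931), 184, 1459, (-2190), (-2190), 184, 718, (-2279), (-2279), 15966]

def Upm6 : Matrix (Fin 12) (Fin 12) ℤ := !![(-6), (-1), 0, (-1), 0, (-1), 0, (-1), 0, 0, 0, 0;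
  0, (-35), (-6), 1, 0, 1, 0, 1, (-6), 0, (-6), 0;
  0, 0, (-204), (-36), 0, (-1), 0, (-1), (-29), 0, 6, (-35);
  0, 0, 0, (-96), (-17), 3, 0, (-14), 2, 0, (-1), 3;
  0, 0, 0, 0, (-559), (-99), (-96), 14, (-2), (-96), (-95), (-3);
  0, 0, 0, 0, 0, (-37835), (-5520), 805, (-115), (-5520), 966, (-6601);
  0, 0, 0, 0, 0, 0, (-1878), (-343), 2, 96, (-280), (-280);
  0, 0, 0, 0, 0, 0, 0, (-10351), (-1960), (-180), 212, 212;
  0, 0, 0, 0, 0, 0, 0, 0, (-57040), (-10097), 1311, 1311;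
  0, 0, 0, 0, 0, 0, 0, 0, 0, (-13687), (-2279), (-2279);
  0, 0, 0, 0, 0, 0, 0, 0, 0, 0, (-367218), (-52417);
  0, 0, 0, 0, 0, 0, 0, 0, 0, 0, 0, (-83927)]

lemma detMpm6 :
    (Matrix.diagonal (fun _ : Fin 12 => (-6:ℤ)) - Aexp).det = 1021139809 :=
  det_cert (Matrix.diagonal (fun _ : Fin 12 => (-6:ℤ)) - Aexp) Epm6 Upm6
    39841196714934084786300880896000 (40683432003819218786273087334673188864000) (1021139809)
    (by decide) (by intro i j hij; revert i j; exact @of_decide_eq_true _ (@Fintype.decidableForallFintype _ _ (fun i => @Fintype.decidableForallFintype _ _ (fun j => inferInstance) _) _) rfl) (by intro i j hij; revert i j; exact @of_decide_eq_true _ (@Fintype.decidableForallFintype _ _ (fun i => @Fintype.decidableForallFintype _ _ (fun j => inferInstance) _) _) rfl)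
    (by decide) (by decide) (by norm_num) (by norm_num)


def Epm5 : Matrix (Fin 12) (Fin 12) ℤ := !![1, 0, 0, 0, 0, 0, 0, 0, 0, 0, 0, 0;
  (-1), 5, 0, 0, 0, 0, 0, 0, 0, 0, 0, 0;
  1, (-5), 24, 0, 0, 0, 0, 0, 0, 0, 0, 0;
  (-5), 2, (-5), 23, 0, 0, 0, 0, 0, 0, 0, 0;
  5, (-2), 5, (-23), 105, 0, 0, 0, 0, 0, 0, 0;
  (-288), 65, (-37), 120, (-275), 1255, 0, 0, 0, 0, 0, 0;
  6, (-1), (-1), 6, (-35), (-35), 204, 0, 0, 0, 0, 0;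
  (-174), 29, 29, (-174), 65, 65, (-216), 950, 0, 0, 0, 0;
  44, (-107), (-107), 44, (-13), (-13), 34, (-144), 598, 0, 0, 0;
  28, 43, 43, 28, (-239), (-239), 90, 28, (-286), 1316, 0, 0;
  196, (-2607), 301, 196, (-1673), 1235, (-2278), 196, 906, (-2420), 11632, 0;
  98, 453, (-1606), 98, 920, (-1139), (-1139), 98, 453, (-1210), (-1210), 7026]

def Upm5 : Matrix (Fin 12) (Fin 12) ℤ := !![(-5), (-1), 0, (-1), 0, (-1), 0, (-1), 0, 0, 0, 0;
  0, (-24), (-5), 1, 0, 1, 0, 1, (-5), 0, (-5), 0;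
  0, 0, (-115), (-25), 0, (-1), 0, (-1), (-19), 0, 5, (-24);
  0, 0, 0, (-105), (-23), 5, 0, (-18), 3, 0, (-2), 5;
  0, 0, 0, 0, (-502), (-110), (-105), 18, (-3), (-105), (-103), (-5);
  0, 0, 0, 0, 0, (-5712), (-980), 168, (-28), (-980), 210, (-1218);
  0, 0, 0, 0, 0, 0, (-950), (-216), 2, 70, (-168), (-168);
  0, 0, 0, 0, 0, 0, 0, (-4186), (-1008), (-130), 122, 122;
  0, 0, 0, 0, 0, 0, 0, 0, (-2632), (-572), 86, 86;
  0, 0, 0, 0, 0, 0, 0, 0, 0, (-5816), (-1210), (-1210);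
  0, 0, 0, 0, 0, 0, 0, 0, 0, 0, (-49182), (-8470);
  0, 0, 0, 0, 0, 0, 0, 0, 0, 0, 0, (-28826)]

lemma detMpm5 :
    (Matrix.diagonal (fun _ : Fin 12 => (-5:ℤ)) - Aexp).det = 79098544 :=
  det_cert (Matrix.diagonal (fun _ : Fin 12 => (-5:ℤ)) - Aexp) Epm5 Upm5
    4533310768247929792051200000 (358578281267932677565472693452800000) (79098544)
    (by decide) (by intro i j hij; revert i j; exact @of_decide_eq_true _ (@Fintype.decidableForallFintype _ _ (fun i => @Fintype.decidableForallFintype _ _ (fun j => inferInstance) _) _) rfl) (by intro i j hij; revert i j; exact @of_decide_eq_true _ (@Fintype.decidableForallFintype _ _ (fun i => @Fintype.decidableForallFintype _ _ (fun j => inferInstance) _) _) rfl)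
    (by decide) (by decide) (by norm_num) (by norm_num)


def Epm4 : Matrix (Fin 12) (Fin 12) ℤ := !![1, 0, 0, 0, 0, 0, 0, 0, 0, 0, 0, 0;
  (-1), 4, 0, 0, 0, 0, 0, 0, 0, 0, 0, 0;
  1, (-4), 15, 0, 0, 0, 0, 0, 0, 0, 0, 0;
  (-2), 1, (-2), 7, 0, 0, 0, 0, 0, 0, 0, 0;
  2, (-1), 2, (-7), 24, 0, 0, 0, 0, 0, 0, 0;
  (-225), 68, (-47), 120, (-208), 712, 0, 0, 0, 0, 0, 0;
  5, (-1), (-1), 5, (-24), (-24), 115, 0, 0, 0, 0, 0;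
  (-95), 19, 19, (-95), 44, 44, (-125), 412, 0, 0, 0, 0;
  162, (-299), (-299), 162, (-61), (-61), 143, (-450), 1333, 0, 0, 0;
  18, 31, 31, 18, (-139), (-139), 65, 18, (-173), 612, 0, 0;
  126, (-1780), 217, 126, (-973), 1024, (-1542), 126, 786, (-1707), 5991, 0;
  42, 262, (-783), 42, 531, (-514), (-514), 42, 262, (-569), (-569), 2566]

def Upm4 : Matrix (Fin 12) (Fin 12) ℤ := !![(-4), (-1), 0, (-1), 0, (-1), 0, (-1), 0, 0, 0, 0;
  0, (-15), (-4), 1, 0, 1, 0, 1, (-4), 0, (-4), 0;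
  0, 0, (-56), (-16), 0, (-1), 0, (-1), (-11), 0, 4, (-15);
  0, 0, 0, (-24), (-7), 2, 0, (-5), 1, 0, (-1), 2;
  0, 0, 0, 0, (-89), (-26), (-24), 5, (-1), (-24), (-23), (-2);
  0, 0, 0, 0, 0, (-2415), (-504), 105, (-21), (-504), 140, (-665);
  0, 0, 0, 0, 0, 0, (-412), (-125), 2, 48, (-90), (-90);
  0, 0, 0, 0, 0, 0, 0, (-1333), (-450), (-88), 62, 62;
  0, 0, 0, 0, 0, 0, 0, 0, (-4284), (-1211), 217, 217;
  0, 0, 0, 0, 0, 0, 0, 0, 0, (-1997), (-569), (-569);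
  0, 0, 0, 0, 0, 0, 0, 0, 0, 0, (-17962), (-3983);
  0, 0, 0, 0, 0, 0, 0, 0, 0, 0, 0, (-7315)]

lemma detMpm4 :
    (Matrix.diagonal (fun _ : Fin 12 => (-4:ℤ)) - Aexp).det = 2509045 :=
  det_cert (Matrix.diagonal (fun _ : Fin 12 => (-4:ℤ)) - Aexp) Epm4 Upm4
    4264549161723085158604800 (10699945751475498201771580416000) (2509045)
    (by decide) (by intro i j hij; revert i j; exact @of_decide_eq_true _ (@Fintype.decidableForallFintype _ _ (fun i => @Fintype.decidableForallFintype _ _ (fun j => inferInstance) _) _) rfl) (by intro i j hij; revert i j; exact @of_decide_eq_true _ (@Fintype.decidableForallFintype _ _ (fun i => @Fintype.decidableForallFintype _ _ (fun j => inferInstance) _) _) rfl)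
    (by decide) (by decide) (by norm_num) (by norm_num)


def Epm3 : Matrix (Fin 12) (Fin 12) ℤ := !![1, 0, 0, 0, 0, 0, 0, 0, 0, 0, 0, 0;
  (-1), 3, 0, 0, 0, 0, 0, 0, 0, 0, 0, 0;
  1, (-3), 8, 0, 0, 0, 0, 0, 0, 0, 0, 0;
  (-3), 2, (-3), 7, 0, 0, 0, 0, 0, 0, 0, 0;
  3, (-2), 3, (-7), 15, 0, 0, 0, 0, 0, 0, 0;
  (-32), 15, (-13), 24, (-27), 57, 0, 0, 0, 0, 0, 0;
  4, (-1), (-1), 4, (-15), (-15), 56, 0, 0, 0, 0, 0;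
  (-44), 11, 11, (-44), 27, 27, (-64), 138, 0, 0, 0, 0;
  70, (-83), (-83), 70, (-37), (-37), 78, (-160), 262, 0, 0, 0;
  10, 21, 21, 10, (-71), (-71), 44, 10, (-94), 230, 0, 0;
  10, (-206), 21, 10, (-71), 156, (-183), 10, 133, (-224), 454, 0;
  10, 133, (-318), 10, 268, (-183), (-183), 10, 133, (-224), (-224), 678]

def Upm3 : Matrix (Fin 12) (Fin 12) ℤ := !![(-3), (-1), 0, (-1), 0, (-1), 0, (-1), 0, 0, 0, 0;
  0, (-8), (-3), 1, 0, 1, 0, 1, (-3), 0, (-3), 0;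
  0, 0, (-21), (-9), 0, (-1), 0, (-1), (-5), 0, 3, (-8);
  0, 0, 0, (-15), (-7), 3, 0, (-4), 1, 0, (-2), 3;
  0, 0, 0, 0, (-38), (-18), (-15), 4, (-1), (-15), (-13), (-3);
  0, 0, 0, 0, 0, (-112), (-30), 8, (-2), (-30), 12, (-44);
  0, 0, 0, 0, 0, 0, (-138), (-64), 2, 30, (-40), (-40);
  0, 0, 0, 0, 0, 0, 0, (-262), (-160), (-54), 26, 26;
  0, 0, 0, 0, 0, 0, 0, 0, (-460), (-188), 42, 42;
  0, 0, 0, 0, 0, 0, 0, 0, 0, (-454), (-224), (-224);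
  0, 0, 0, 0, 0, 0, 0, 0, 0, 0, (-678), (-224);
  0, 0, 0, 0, 0, 0, 0, 0, 0, 0, 0, (-902)]

lemma detMpm3 :
    (Matrix.diagonal (fun _ : Fin 12 => (-3:ℤ)) - Aexp).det = 7216 :=
  det_cert (Matrix.diagonal (fun _ : Fin 12 => (-3:ℤ)) - Aexp) Epm3 Upm3
    20590039696855910400 (148577726452512249446400) (7216)
    (by decide) (by intro i j hij; revert i j; exact @of_decide_eq_true _ (@Fintype.decidableForallFintype _ _ (fun i => @Fintype.decidableForallFintype _ _ (fun j => inferInstance) _) _) rfl) (by intro i j hij; revert i j; exact @of_decide_eq_true _ (@Fintype.decidableForallFintype _ _ (fun i => @Fintype.decidableForallFintype _ _ (fun j => inferInstance) _) _) rfl)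
    (by decide) (by decide) (by norm_num) (by norm_num)


def Ep3 : Matrix (Fin 12) (Fin 12) ℤ := !![1, 0, 0, 0, 0, 0, 0, 0, 0, 0, 0, 0;
  1, 3, 0, 0, 0, 0, 0, 0, 0, 0, 0, 0;
  1, 3, 8, 0, 0, 0, 0, 0, 0, 0, 0, 0;
  3, 2, 3, 7, 0, 0, 0, 0, 0, 0, 0, 0;
  3, 2, 3, 7, 15, 0, 0, 0, 0, 0, 0, 0;
  32, 15, 13, 24, 27, 57, 0, 0, 0, 0, 0, 0;
  2, 1, 1, 2, 3, 3, 4, 0, 0, 0, 0, 0;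
  10, 5, 5, 10, 9, 9, 8, 6, 0, 0, 0, 0;
  (-20), (-5), (-5), (-20), (-19), (-19), (-18), (-16), 10, 0, 0, 0;
  (-4), (-3), (-3), (-4), (-1), (-1), (-2), (-4), (-2), 4, 0, 0;
  (-28), (-13), (-21), (-28), (-7), (-15), (-6), (-28), (-22), (-4), 32, 0;
  (-14), (-11), (-6), (-14), (-8), (-3), (-3), (-14), (-11), (-2), (-2), 18]

def Up3 : Matrix (Fin 12) (Fin 12) ℤ := !![3, (-1), 0, (-1), 0, (-1), 0, (-1), 0, 0, 0, 0;
  0, 8, (-3), (-1), 0, (-1), 0, (-1), (-3), 0, (-3), 0;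
  0, 0, 21, (-9), 0, (-1), 0, (-1), (-11), 0, (-3), (-8);
  0, 0, 0, 15, (-7), (-3), 0, (-10), (-5), 0, (-2), (-3);
  0, 0, 0, 0, 38, (-18), (-15), (-10), (-5), (-15), (-17), (-3);
  0, 0, 0, 0, 0, 112, (-84), (-56), (-28), (-84), (-42), (-70);
  0, 0, 0, 0, 0, 0, 6, (-8), (-2), (-6), (-8), (-8);
  0, 0, 0, 0, 0, 0, 0, (-10), (-16), (-18), (-22), (-22);
  0, 0, 0, 0, 0, 0, 0, 0, 56, 28, 42, 42;
  0, 0, 0, 0, 0, 0, 0, 0, 0, 16, 2, 2;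
  0, 0, 0, 0, 0, 0, 0, 0, 0, 0, 126, 14;
  0, 0, 0, 0, 0, 0, 0, 0, 0, 0, 0, 70]

lemma detMp3 :
    (Matrix.diagonal (fun _ : Fin 12 => (3:ℤ)) - Aexp).det = -192080 :=
  det_cert (Matrix.diagonal (fun _ : Fin 12 => (3:ℤ)) - Aexp) Ep3 Up3
    79427174400 (-15256371658752000) (-192080)
    (by decide) (by intro i j hij; revert i j; exact @of_decide_eq_true _ (@Fintype.decidableForallFintype _ _ (fun i => @Fintype.decidableForallFintype _ _ (fun j => inferInstance) _) _) rfl) (by intro i j hij; revert i j; exact @of_decide_eq_true _ (@Fintype.decidableForallFintype _ _ (fun i => @Fintype.decidableForallFintype _ _ (fun j => inferInstance) _) _) rfl)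
    (by decide) (by decide) (by norm_num) (by norm_num)


def Ep4 : Matrix (Fin 12) (Fin 12) ℤ := !![1, 0, 0, 0, 0, 0, 0, 0, 0, 0, 0, 0;
  1, 4, 0, 0, 0, 0, 0, 0, 0, 0, 0, 0;
  1, 4, 15, 0, 0, 0, 0, 0, 0, 0, 0, 0;
  2, 1, 2, 7, 0, 0, 0, 0, 0, 0, 0, 0;
  2, 1, 2, 7, 24, 0, 0, 0, 0, 0, 0, 0;
  225, 68, 47, 120, 208, 712, 0, 0, 0, 0, 0, 0;
  3, 1, 1, 3, 8, 8, 21, 0, 0, 0, 0, 0;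
  33, 11, 11, 33, 20, 20, 27, 68, 0, 0, 0, 0;
  70, 83, 83, 70, 37, 37, 41, 90, 179, 0, 0, 0;
  10, 7, 7, 10, 13, 13, 9, 10, 11, 20, 0, 0;
  230, 204, 161, 230, 299, 256, 250, 230, 210, 245, 215, 0;
  (-46), (-42), (-31), (-46), (-61), (-50), (-50), (-46), (-42), (-49), (-49), 6]

def Up4 : Matrix (Fin 12) (Fin 12) ℤ := !![4, (-1), 0, (-1), 0, (-1), 0, (-1), 0, 0, 0, 0;
  0, 15, (-4), (-1), 0, (-1), 0, (-1), (-4), 0, (-4), 0;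
  0, 0, 56, (-16), 0, (-1), 0, (-1), (-19), 0, (-4), (-15);
  0, 0, 0, 24, (-7), (-2), 0, (-9), (-3), 0, (-1), (-2);
  0, 0, 0, 0, 89, (-26), (-24), (-9), (-3), (-24), (-25), (-2);
  0, 0, 0, 0, 0, 2415, (-920), (-345), (-115), (-920), (-276), (-759);
  0, 0, 0, 0, 0, 0, 68, (-27), (-2), (-16), (-30), (-30);
  0, 0, 0, 0, 0, 0, 0, 179, (-90), (-40), (-58), (-58);
  0, 0, 0, 0, 0, 0, 0, 0, 460, (-253), (-161), (-161);
  0, 0, 0, 0, 0, 0, 0, 0, 0, 43, (-49), (-49);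
  0, 0, 0, 0, 0, 0, 0, 0, 0, 0, (-138), (-1127);
  0, 0, 0, 0, 0, 0, 0, 0, 0, 0, 0, 253]

lemma detMp4 :
    (Matrix.diagonal (fun _ : Fin 12 => (4:ℤ)) - Aexp).det = -3078251 :=
  det_cert (Matrix.diagonal (fun _ : Fin 12 => (4:ℤ)) - Aexp) Ep4 Up4
    47330541167616000 (-145695285679755119616000) (-3078251)
    (by decide) (by intro i j hij; revert i j; exact @of_decide_eq_true _ (@Fintype.decidableForallFintype _ _ (fun i => @Fintype.decidableForallFintype _ _ (fun j => inferInstance) _) _) rfl) (by intro i j hij; revert i j; exact @of_decide_eq_true _ (@Fintype.decidableForallFintype _ _ (fun i => @Fintype.decidableForallFintype _ _ (fun j => inferInstance) _) _) rfl)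
    (by decide) (by decide) (by norm_num) (by norm_num)


def Ep5 : Matrix (Fin 12) (Fin 12) ℤ := !![1, 0, 0, 0, 0, 0, 0, 0, 0, 0, 0, 0;
  1, 5, 0, 0, 0, 0, 0, 0, 0, 0, 0, 0;
  1, 5, 24, 0, 0, 0, 0, 0, 0, 0, 0, 0;
  5, 2, 5, 23, 0, 0, 0, 0, 0, 0, 0, 0;
  5, 2, 5, 23, 105, 0, 0, 0, 0, 0, 0, 0;
  288, 65, 37, 120, 275, 1255, 0, 0, 0, 0, 0, 0;
  4, 1, 1, 4, 15, 15, 56, 0, 0, 0, 0, 0;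
  76, 19, 19, 76, 35, 35, 64, 250, 0, 0, 0, 0;
  162, 299, 299, 162, 61, 61, 82, 288, 1034, 0, 0, 0;
  18, 13, 13, 18, 41, 41, 20, 18, 34, 126, 0, 0;
  306, 478, 221, 306, 697, 440, 597, 306, 321, 600, 1542, 0;
  102, 107, 126, 102, 180, 199, 199, 102, 107, 200, 200, 314]

def Up5 : Matrix (Fin 12) (Fin 12) ℤ := !![5, (-1), 0, (-1), 0, (-1), 0, (-1), 0, 0, 0, 0;
  0, 24, (-5), (-1), 0, (-1), 0, (-1), (-5), 0, (-5), 0;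
  0, 0, 115, (-25), 0, (-1), 0, (-1), (-29), 0, (-5), (-24);
  0, 0, 0, 105, (-23), (-5), 0, (-28), (-7), 0, (-2), (-5);
  0, 0, 0, 0, 502, (-110), (-105), (-28), (-7), (-105), (-107), (-5);
  0, 0, 0, 0, 0, 5712, (-1530), (-408), (-102), (-1530), (-340), (-1292);
  0, 0, 0, 0, 0, 0, 250, (-64), (-2), (-30), (-72), (-72);
  0, 0, 0, 0, 0, 0, 0, 1034, (-288), (-70), (-118), (-118);
  0, 0, 0, 0, 0, 0, 0, 0, 4284, (-1156), (-442), (-442);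
  0, 0, 0, 0, 0, 0, 0, 0, 0, 514, (-200), (-200);
  0, 0, 0, 0, 0, 0, 0, 0, 0, 0, 5338, (-3400);
  0, 0, 0, 0, 0, 0, 0, 0, 0, 0, 0, 646]

lemma detMp5 :
    (Matrix.diagonal (fun _ : Fin 12 => (5:ℤ)) - Aexp).det = 25390384 :=
  det_cert (Matrix.diagonal (fun _ : Fin 12 => (5:ℤ)) - Aexp) Ep5 Up5
    321199786766894112000000 (8155385926729559991019008000000) (25390384)
    (by decide) (by intro i j hij; revert i j; exact @of_decide_eq_true _ (@Fintype.decidableForallFintype _ _ (fun i => @Fintype.decidableForallFintype _ _ (fun j => inferInstance) _) _) rfl) (by intro i j hij; revert i j; exact @of_decide_eq_true _ (@Fintype.decidableForallFintype _ _ (fun i => @Fintype.decidableForallFintype _ _ (fun j => inferInstance) _) _) rfl)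
    (by decide) (by decide) (by norm_num) (by norm_num)


def Ep6 : Matrix (Fin 12) (Fin 12) ℤ := !![1, 0, 0, 0, 0, 0, 0, 0, 0, 0, 0, 0;
  1, 6, 0, 0, 0, 0, 0, 0, 0, 0, 0, 0;
  1, 6, 35, 0, 0, 0, 0, 0, 0, 0, 0, 0;
  3, 1, 3, 17, 0, 0, 0, 0, 0, 0, 0, 0;
  3, 1, 3, 17, 96, 0, 0, 0, 0, 0, 0, 0;
  1225, 222, 107, 420, 1188, 6708, 0, 0, 0, 0, 0, 0;
  5, 1, 1, 5, 24, 24, 115, 0, 0, 0, 0, 0;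
  145, 29, 29, 145, 54, 54, 125, 642, 0, 0, 0, 0;
  44, 107, 107, 44, 13, 13, 21, 100, 491, 0, 0, 0;
  4, 3, 3, 4, 13, 13, 5, 4, 11, 56, 0, 0;
  188, 440, 141, 188, 611, 312, 534, 188, 218, 539, 2093, 0;
  188, 218, 363, 188, 389, 534, 534, 188, 218, 539, 539, 1554]

def Up6 : Matrix (Fin 12) (Fin 12) ℤ := !![6, (-1), 0, (-1), 0, (-1), 0, (-1), 0, 0, 0, 0;
  0, 35, (-6), (-1), 0, (-1), 0, (-1), (-6), 0, (-6), 0;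
  0, 0, 204, (-36), 0, (-1), 0, (-1), (-41), 0, (-6), (-35);
  0, 0, 0, 96, (-17), (-3), 0, (-20), (-4), 0, (-1), (-3);
  0, 0, 0, 0, 559, (-99), (-96), (-20), (-4), (-96), (-97), (-3);
  0, 0, 0, 0, 0, 37835, (-7896), (-1645), (-329), (-7896), (-1410), (-6815);
  0, 0, 0, 0, 0, 0, 642, (-125), (-2), (-48), (-140), (-140);
  0, 0, 0, 0, 0, 0, 0, 3437, (-700), (-108), (-208), (-208);
  0, 0, 0, 0, 0, 0, 0, 0, 2632, (-517), (-141), (-141);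
  0, 0, 0, 0, 0, 0, 0, 0, 0, 299, (-77), (-77);
  0, 0, 0, 0, 0, 0, 0, 0, 0, 0, 10434, (-3619);
  0, 0, 0, 0, 0, 0, 0, 0, 0, 0, 0, 6815]

lemma detMp6 :
    (Matrix.diagonal (fun _ : Fin 12 => (6:ℤ)) - Aexp).det = 707553745 :=
  det_cert (Matrix.diagonal (fun _ : Fin 12 => (6:ℤ)) - Aexp) Ep6 Up6
    15179418454964443274649600 (10740254374732205680818388042752000) (707553745)
    (by decide) (by intro i j hij; revert i j; exact @of_decide_eq_true _ (@Fintype.decidableForallFintype _ _ (fun i => @Fintype.decidableForallFintype _ _ (fun j => inferInstance) _) _) rfl) (by intro i j hij; revert i j; exact @of_decide_eq_true _ (@Fintype.decidableForallFintype _ _ (fun i => @Fintype.decidableForallFintype _ _ (fun j => inferInstance) _) _) rfl)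
    (by decide) (by decide) (by norm_num) (by norm_num)


def Ep7 : Matrix (Fin 12) (Fin 12) ℤ := !![1, 0, 0, 0, 0, 0, 0, 0, 0, 0, 0, 0;
  1, 7, 0, 0, 0, 0, 0, 0, 0, 0, 0, 0;
  1, 7, 48, 0, 0, 0, 0, 0, 0, 0, 0, 0;
  7, 2, 7, 47, 0, 0, 0, 0, 0, 0, 0, 0;
  7, 2, 7, 47, 315, 0, 0, 0, 0, 0, 0, 0;
  1152, 175, 73, 336, 1127, 7553, 0, 0, 0, 0, 0, 0;
  6, 1, 1, 6, 35, 35, 204, 0, 0, 0, 0, 0;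
  246, 41, 41, 246, 77, 77, 216, 1358, 0, 0, 0, 0;
  520, 1553, 1553, 520, 127, 127, 242, 1440, 8798, 0, 0, 0;
  40, 31, 31, 40, 169, 169, 54, 40, 146, 920, 0, 0;
  1240, 3939, 961, 1240, 5239, 2261, 4652, 1240, 1548, 4696, 23824, 0;
  310, 387, 838, 310, 712, 1163, 1163, 310, 387, 1174, 1174, 4782]

def Up7 : Matrix (Fin 12) (Fin 12) ℤ := !![7, (-1), 0, (-1), 0, (-1), 0, (-1), 0, 0, 0, 0;
  0, 48, (-7), (-1), 0, (-1), 0, (-1), (-7), 0, (-7), 0;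
  0, 0, 329, (-49), 0, (-1), 0, (-1), (-55), 0, (-7), (-48);
  0, 0, 0, 315, (-47), (-7), 0, (-54), (-9), 0, (-2), (-7);
  0, 0, 0, 0, 2158, (-322), (-315), (-54), (-9), (-315), (-317), (-7);
  0, 0, 0, 0, 0, 50592, (-8680), (-1488), (-248), (-8680), (-1302), (-7626);
  0, 0, 0, 0, 0, 0, 1358, (-216), (-2), (-70), (-240), (-240);
  0, 0, 0, 0, 0, 0, 0, 8798, (-1440), (-154), (-334), (-334);
  0, 0, 0, 0, 0, 0, 0, 0, 57040, (-9052), (-1922), (-1922);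
  0, 0, 0, 0, 0, 0, 0, 0, 0, 5956, (-1174), (-1174);
  0, 0, 0, 0, 0, 0, 0, 0, 0, 0, 148242, (-36394);
  0, 0, 0, 0, 0, 0, 0, 0, 0, 0, 0, 27962]

lemma detMp7 :
    (Matrix.diagonal (fun _ : Fin 12 => (7:ℤ)) - Aexp).det = 6664127536 :=
  det_cert (Matrix.diagonal (fun _ : Fin 12 => (7:ℤ)) - Aexp) Ep7 Up7
    9598274107548447794396907110400 (63964122778189436400698895187650831974400) (6664127536)
    (by decide) (by intro i j hij; revert i j; exact @of_decide_eq_true _ (@Fintype.decidableForallFintype _ _ (fun i => @Fintype.decidableForallFintype _ _ (fun j => inferInstance) _) _) rfl) (by intro i j hij; revert i j; exact @of_decide_eq_true _ (@Fintype.decidableForallFintype _ _ (fun i => @Fintype.decidableForallFintype _ _ (fun j => inferInstance) _) _) rfl)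
    (by decide) (by decide) (by norm_num) (by norm_num)


def Ep8 : Matrix (Fin 12) (Fin 12) ℤ := !![1, 0, 0, 0, 0, 0, 0, 0, 0, 0, 0, 0;
  1, 8, 0, 0, 0, 0, 0, 0, 0, 0, 0, 0;
  1, 8, 63, 0, 0, 0, 0, 0, 0, 0, 0, 0;
  4, 1, 4, 31, 0, 0, 0, 0, 0, 0, 0, 0;
  4, 1, 4, 31, 240, 0, 0, 0, 0, 0, 0, 0;
  3969, 520, 191, 1008, 3904, 30224, 0, 0, 0, 0, 0, 0;
  7, 1, 1, 7, 48, 48, 329, 0, 0, 0, 0, 0;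
  385, 55, 55, 385, 104, 104, 343, 2536, 0, 0, 0, 0;
  810, 2855, 2855, 810, 169, 169, 373, 2646, 19175, 0, 0, 0;
  54, 43, 43, 54, 281, 281, 77, 54, 247, 1836, 0, 0;
  4266, 17276, 3397, 4266, 22199, 8320, 19962, 4266, 5634, 20133, 124911, 0;
  474, 626, 1671, 474, 1173, 2218, 2218, 474, 626, 2237, 2237, 11642]

def Up8 : Matrix (Fin 12) (Fin 12) ℤ := !![8, (-1), 0, (-1), 0, (-1), 0, (-1), 0, 0, 0, 0;
  0, 63, (-8), (-1), 0, (-1), 0, (-1), (-8), 0, (-8), 0;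
  0, 0, 496, (-64), 0, (-1), 0, (-1), (-71), 0, (-8), (-63);
  0, 0, 0, 240, (-31), (-4), 0, (-35), (-5), 0, (-1), (-4);
  0, 0, 0, 0, 1889, (-244), (-240), (-35), (-5), (-240), (-241), (-4);
  0, 0, 0, 0, 0, 233919, (-34128), (-4977), (-711), (-34128), (-4424), (-30415);
  0, 0, 0, 0, 0, 0, 2536, (-343), (-2), (-96), (-378), (-378);
  0, 0, 0, 0, 0, 0, 0, 19175, (-2646), (-208), (-502), (-502);
  0, 0, 0, 0, 0, 0, 0, 0, 145044, (-19513), (-3397), (-3397);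
  0, 0, 0, 0, 0, 0, 0, 0, 0, 13879, (-2237), (-2237);
  0, 0, 0, 0, 0, 0, 0, 0, 0, 0, 919718, (-176723);
  0, 0, 0, 0, 0, 0, 0, 0, 0, 0, 0, 82555]

lemma detMp8 :
    (Matrix.diagonal (fun _ : Fin 12 => (8:ℤ)) - Aexp).det = 40702834645 :=
  det_cert (Matrix.diagonal (fun _ : Fin 12 => (8:ℤ)) - Aexp) Ep8 Up8
    4841020139283761554373457494016000 (197043242242381815281271016955869324984320000) (40702834645)
    (by decide) (by intro i j hij; revert i j; exact @of_decide_eq_true _ (@Fintype.decidableForallFintype _ _ (fun i => @Fintype.decidableForallFintype _ _ (fun j => inferInstance) _) _) rfl) (by intro i j hij; revert i j; exact @of_decide_eq_true _ (@Fintype.decidableForallFintype _ _ (fun i => @Fintype.decidableForallFintype _ _ (fun j => inferInstance) _) _) rfl)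
    (by decide) (by decide) (by norm_num) (by norm_num)


def Ep9 : Matrix (Fin 12) (Fin 12) ℤ := !![1, 0, 0, 0, 0, 0, 0, 0, 0, 0, 0, 0;
  1, 9, 0, 0, 0, 0, 0, 0, 0, 0, 0, 0;
  1, 9, 80, 0, 0, 0, 0, 0, 0, 0, 0, 0;
  9, 2, 9, 79, 0, 0, 0, 0, 0, 0, 0, 0;
  9, 2, 9, 79, 693, 0, 0, 0, 0, 0, 0, 0;
  3200, 369, 121, 720, 3159, 27711, 0, 0, 0, 0, 0, 0;
  8, 1, 1, 8, 63, 63, 496, 0, 0, 0, 0, 0;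
  568, 71, 71, 568, 135, 135, 512, 4338, 0, 0, 0, 0;
  170, 689, 689, 170, 31, 31, 78, 640, 5342, 0, 0, 0;
  70, 57, 57, 70, 433, 433, 104, 70, 386, 3290, 0, 0;
  3430, 16972, 2793, 3430, 21217, 7038, 19275, 3430, 4735, 19420, 141790, 0;
  686, 947, 3006, 686, 1796, 3855, 3855, 686, 947, 3884, 3884, 24474]

def Up9 : Matrix (Fin 12) (Fin 12) ℤ := !![9, (-1), 0, (-1), 0, (-1), 0, (-1), 0, 0, 0, 0;
  0, 80, (-9), (-1), 0, (-1), 0, (-1), (-9), 0, (-9), 0;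
  0, 0, 711, (-81), 0, (-1), 0, (-1), (-89), 0, (-9), (-80);
  0, 0, 0, 693, (-79), (-9), 0, (-88), (-11), 0, (-2), (-9);
  0, 0, 0, 0, 6158, (-702), (-693), (-88), (-11), (-693), (-695), (-9);
  0, 0, 0, 0, 0, 243040, (-30870), (-3920), (-490), (-30870), (-3528), (-27832);
  0, 0, 0, 0, 0, 0, 4338, (-512), (-2), (-126), (-560), (-560);
  0, 0, 0, 0, 0, 0, 0, 37394, (-4480), (-270), (-718), (-718);
  0, 0, 0, 0, 0, 0, 0, 0, 46060, (-5404), (-798), (-798);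
  0, 0, 0, 0, 0, 0, 0, 0, 0, 28358, (-3884), (-3884);
  0, 0, 0, 0, 0, 0, 0, 0, 0, 0, 1199226, (-190316);
  0, 0, 0, 0, 0, 0, 0, 0, 0, 0, 0, 201782]

lemma detMp9 :
    (Matrix.diagonal (fun _ : Fin 12 => (9:ℤ)) - Aexp).det = 189915604144 :=
  det_cert (Matrix.diagonal (fun _ : Fin 12 => (9:ℤ)) - Aexp) Ep9 Up9
    143339730861736406929401076755456000 (27222451584445031454877033448096541588209664000) (189915604144)
    (by decide) (by intro i j hij; revert i j; exact @of_decide_eq_true _ (@Fintype.decidableForallFintype _ _ (fun i => @Fintype.decidableForallFintype _ _ (fun j => inferInstance) _) _) rfl) (by intro i j hij; revert i j; exact @of_decide_eq_true _ (@Fintype.decidableForallFintype _ _ (fun i => @Fintype.decidableForallFintype _ _ (fun j => inferInstance) _) _) rfl)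
    (by decide) (by decide) (by norm_num) (by norm_num)


def Ep10 : Matrix (Fin 12) (Fin 12) ℤ := !![1, 0, 0, 0, 0, 0, 0, 0, 0, 0, 0, 0;
  1, 10, 0, 0, 0, 0, 0, 0, 0, 0, 0, 0;
  1, 10, 99, 0, 0, 0, 0, 0, 0, 0, 0, 0;
  5, 1, 5, 49, 0, 0, 0, 0, 0, 0, 0, 0;
  5, 1, 5, 49, 480, 0, 0, 0, 0, 0, 0, 0;
  9801, 1010, 299, 1980, 9700, 95020, 0, 0, 0, 0, 0, 0;
  9, 1, 1, 9, 80, 80, 711, 0, 0, 0, 0, 0;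
  801, 89, 89, 801, 170, 170, 729, 6950, 0, 0, 0, 0;
  1672, 7649, 7649, 1672, 271, 271, 767, 7128, 67169, 0, 0, 0;
  88, 73, 73, 88, 631, 631, 135, 88, 569, 5456, 0, 0;
  10472, 61416, 8687, 10472, 75089, 22360, 68794, 10472, 14982, 69245, 580019, 0;
  952, 1362, 5011, 952, 2605, 6254, 6254, 952, 1362, 6295, 6295, 46434]

def Up10 : Matrix (Fin 12) (Fin 12) ℤ := !![10, (-1), 0, (-1), 0, (-1), 0, (-1), 0, 0, 0, 0;
  0, 99, (-10), (-1), 0, (-1), 0, (-1), (-10), 0, (-10), 0;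
  0, 0, 980, (-100), 0, (-1), 0, (-1), (-109), 0, (-10), (-99);
  0, 0, 0, 480, (-49), (-5), 0, (-54), (-6), 0, (-1), (-5);
  0, 0, 0, 0, 4751, (-485), (-480), (-54), (-6), (-480), (-481), (-5);
  0, 0, 0, 0, 0, 930699, (-104720), (-11781), (-1309), (-104720), (-10710), (-95319);
  0, 0, 0, 0, 0, 0, 6950, (-729), (-2), (-160), (-792), (-792);
  0, 0, 0, 0, 0, 0, 0, 67169, (-7128), (-340), (-988), (-988);
  0, 0, 0, 0, 0, 0, 0, 0, 649264, (-67711), (-8687), (-8687);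
  0, 0, 0, 0, 0, 0, 0, 0, 0, 52729, (-6295), (-6295);
  0, 0, 0, 0, 0, 0, 0, 0, 0, 0, 5525646, (-749105);
  0, 0, 0, 0, 0, 0, 0, 0, 0, 0, 0, 434231]

lemma detMp10 :
    (Matrix.diagonal (fun _ : Fin 12 => (10:ℤ)) - Aexp).det = 731748277729 :=
  det_cert (Matrix.diagonal (fun _ : Fin 12 => (10:ℤ)) - Aexp) Ep10 Up10
    107910450337740674037534360198604800000 (78963286183602524595997352776988988788712499200000) (731748277729)
    (by decide) (by intro i j hij; revert i j; exact @of_decide_eq_true _ (@Fintype.decidableForallFintype _ _ (fun i => @Fintype.decidableForallFintype _ _ (fun j => inferInstance) _) _) rfl) (by intro i j hij; revert i j; exact @of_decide_eq_true _ (@Fintype.decidableForallFintype _ _ (fun i => @Fintype.decidableForallFintype _ _ (fun j => inferInstance) _) _) rfl)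
    (by decide) (by decide) (by norm_num) (by norm_num)


lemma eval_charpoly12 (M : Matrix (Fin 12) (Fin 12) ℤ) (r : ℤ) :
    (M.charpoly).eval r = (Matrix.diagonal (fun _ : Fin 12 => r) - M).det := by
  unfold Matrix.charpoly
  rw [← Polynomial.coe_evalRingHom, RingHom.map_det]
  congr 1
  ext i j
  by_cases hij : i = j
  · subst hij
    simp [Matrix.charmatrix_apply_eq]
  · simp [Matrix.charmatrix_apply_ne _ _ _ hij, Matrix.diagonal_apply_ne _ hij, hij]

noncomputable def qpoly : ℤ[X] :=
  X ^ 12 - 27 * X ^ 10 - 20 * X ^ 9 + 207 * X ^ 8 + 168 * X ^ 7 - 610 * X ^ 6 - 288 * X ^ 5 + 723 * X ^ 4 - 136 * X ^ 3 - 171 * X ^ 2 + 84 * X - 11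

lemma qpoly_natDegree_le : qpoly.natDegree ≤ 12 := by
  unfold qpoly
  compute_degree

lemma qpoly_eval (r : ℤ) : qpoly.eval r =
    r ^ 12 - 27 * r ^ 10 - 20 * r ^ 9 + 207 * r ^ 8 + 168 * r ^ 7 - 610 * r ^ 6 - 288 * r ^ 5 + 723 * r ^ 4 - 136 * r ^ 3 - 171 * r ^ 2 + 84 * r - 11 := by
  simp [qpoly]

/-- The characteristic polynomial of the adjacency matrix of `H9`. -/
theorem charpoly_H9 :
    (H9.adjMatrix ℤ).charpoly =
      X ^ 12 - 27 * X ^ 10 - 20 * X ^ 9 + 207 * X ^ 8 + 168 * X ^ 7 - 610 * X ^ 6 - 288 * X ^ 5 + 723 * X ^ 4 - 136 * X ^ 3 - 171 * X ^ 2 + 84 * X - 11 := by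
  have hA : H9.adjMatrix ℤ = Aexp := by decide
  have hAc : ∀ r : ℤ, ((H9.adjMatrix ℤ).charpoly).eval r = (Aexp.charpoly).eval r := by
    rw [hA]; intro r; rfl
  have hdeg : ((H9.adjMatrix ℤ).charpoly).natDegree = 12 := by
    rw [Matrix.charpoly_natDegree_eq_dim]
    simp
  have hqd : qpoly.natDegree ≤ 12 := qpoly_natDegree_le
  have hz : (H9.adjMatrix ℤ).charpoly - qpoly = 0 := by
    apply Polynomial.eq_zero_of_natDegree_lt_card_of_eval_eq_zero
      ((H9.adjMatrix ℤ).charpoly - qpoly) (f := fun i : Fin 13 => ![(-7), (-6), (-5), (-4), (-3), 3, 4, 5, 6, 7, 8, 9, 10] i)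
    · intro a b hab
      revert hab
      revert a b
      decide
    · intro i
      fin_cases i
      · show Polynomial.eval ((-7) : ℤ) ((H9.adjMatrix ℤ).charpoly - qpoly) = 0
        rw [Polynomial.eval_sub, hAc, eval_charpoly12 Aexp (-7), detMpm7, qpoly_eval]
        norm_num
      · show Polynomial.eval ((-6) : ℤ) ((H9.adjMatrix ℤ).charpoly - qpoly) = 0
        rw [Polynomial.eval_sub, hAc, eval_charpoly12 Aexp (-6), detMpm6, qpoly_eval]
        norm_num
      · show Polynomial.eval ((-5) : ℤ) ((H9.adjMatrix ℤ).charpoly - qpoly) = 0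
        rw [Polynomial.eval_sub, hAc, eval_charpoly12 Aexp (-5), detMpm5, qpoly_eval]
        norm_num
      · show Polynomial.eval ((-4) : ℤ) ((H9.adjMatrix ℤ).charpoly - qpoly) = 0
        rw [Polynomial.eval_sub, hAc, eval_charpoly12 Aexp (-4), detMpm4, qpoly_eval]
        norm_num
      · show Polynomial.eval ((-3) : ℤ) ((H9.adjMatrix ℤ).charpoly - qpoly) = 0
        rw [Polynomial.eval_sub, hAc, eval_charpoly12 Aexp (-3), detMpm3, qpoly_eval]
        norm_num
      · show Polynomial.eval ((3) : ℤ) ((H9.adjMatrix ℤ).charpoly - qpoly) = 0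
        rw [Polynomial.eval_sub, hAc, eval_charpoly12 Aexp (3), detMp3, qpoly_eval]
        norm_num
      · show Polynomial.eval ((4) : ℤ) ((H9.adjMatrix ℤ).charpoly - qpoly) = 0
        rw [Polynomial.eval_sub, hAc, eval_charpoly12 Aexp (4), detMp4, qpoly_eval]
        norm_num
      · show Polynomial.eval ((5) : ℤ) ((H9.adjMatrix ℤ).charpoly - qpoly) = 0
        rw [Polynomial.eval_sub, hAc, eval_charpoly12 Aexp (5), detMp5, qpoly_eval]
        norm_num
      · show Polynomial.eval ((6) : ℤ) ((H9.adjMatrix ℤ).charpoly - qpoly) = 0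
        rw [Polynomial.eval_sub, hAc, eval_charpoly12 Aexp (6), detMp6, qpoly_eval]
        norm_num
      · show Polynomial.eval ((7) : ℤ) ((H9.adjMatrix ℤ).charpoly - qpoly) = 0
        rw [Polynomial.eval_sub, hAc, eval_charpoly12 Aexp (7), detMp7, qpoly_eval]
        norm_num
      · show Polynomial.eval ((8) : ℤ) ((H9.adjMatrix ℤ).charpoly - qpoly) = 0
        rw [Polynomial.eval_sub, hAc, eval_charpoly12 Aexp (8), detMp8, qpoly_eval]
        norm_num
      · show Polynomial.eval ((9) : ℤ) ((H9.adjMatrix ℤ).charpoly - qpoly) = 0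
        rw [Polynomial.eval_sub, hAc, eval_charpoly12 Aexp (9), detMp9, qpoly_eval]
        norm_num
      · show Polynomial.eval ((10) : ℤ) ((H9.adjMatrix ℤ).charpoly - qpoly) = 0
        rw [Polynomial.eval_sub, hAc, eval_charpoly12 Aexp (10), detMp10, qpoly_eval]
        norm_num
    · refine lt_of_le_of_lt (Polynomial.natDegree_sub_le _ _) ?_
      rw [hdeg, Fintype.card_fin]
      omega
  have := sub_eq_zero.mp hz
  rw [this]
  rfl
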